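/- Let 0<p<1, q=1-p, and let X_1,...,X_{2m-1} be i.i.d. Bernoulli(p) random variables (1 with probability p, 0 with probability q). For 1 ≤ n ≤ m, let A_n be the event that exactly one of X_n, X_{n+1}, ..., X_{n+m-1} equals 0. Then P(A_1 ∩ complement(A_2) ∩ ... ∩ complement(A_m)) = q p^{m-1} ( p^{m-1} + q·∑_{i=1}^{m-2}(1-p^i) + q ). -/

import Mathlib

open MeasureTheory ProbabilityTheory Finset Filter

/-- Number of zeros (tails) among `X n, X (n+1), ..., X (n+m-1)`. -/
def zerosCount {Ω : Type*} (X : ℕ → Ω → Bool) (n m : ℕ) (ω : Ω) : ℕ :=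
  ((Finset.range m).filter (fun j => X (n + j) ω = false)).card

/-- The event that the window of length `m` starting at `n` contains exactly `T` zeros. -/
def contamRun {Ω : Type*} (X : ℕ → Ω → Bool) (T n m : ℕ) : Set Ω :=
  {ω | zerosCount X n m ω = T}

def zc (f : ℕ → Bool) (a b : ℕ) : ℕ := ((Finset.Icc a b).filter (fun i => f i = false)).card

lemma zc_split (f : ℕ → Bool) {a b c : ℕ} (h1 : a ≤ c + 1) (h2 : c ≤ b) :
    zc f a b = zc f a c + zc f (c+1) b := by
  unfold zc
  have hd : Disjoint ((Finset.Icc a c).filter (fun i => f i = false))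
      ((Finset.Icc (c+1) b).filter (fun i => f i = false)) := by
    apply Finset.disjoint_filter_filter
    rw [Finset.disjoint_left]
    intro x hx hx'
    simp [Finset.mem_Icc] at hx hx'
    omega
  rw [← Finset.card_union_of_disjoint hd, ← Finset.filter_union]
  congr 1
  ext i
  simp [Finset.mem_Icc]
  omega

lemma zc_mono (f : ℕ → Bool) {a b b' : ℕ} (h : b ≤ b') : zc f a b ≤ zc f a b' :=
  Finset.card_le_card (Finset.filter_subset_filter _ (Finset.Icc_subset_Icc le_rfl h))

lemma zc_eq_zero_iff (f : ℕ → Bool) {a b : ℕ} :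
    zc f a b = 0 ↔ ∀ i ∈ Finset.Icc a b, f i = true := by
  unfold zc
  rw [Finset.card_eq_zero, Finset.filter_eq_empty_iff]
  simp

lemma zc_single (f : ℕ → Bool) (a : ℕ) : zc f a a = if f a then 0 else 1 := by
  unfold zc
  cases h : f a <;> simp [Finset.filter_singleton, h]

lemma zc_pos_of_mem (f : ℕ → Bool) {a b i : ℕ} (hi : i ∈ Finset.Icc a b) (hf : f i = false) :
    1 ≤ zc f a b :=
  Finset.card_pos.2 ⟨i, Finset.mem_filter.2 ⟨hi, hf⟩⟩

lemma zc_two_le (f : ℕ → Bool) {a b i j : ℕ} (hi : i ∈ Finset.Icc a b) (hj : j ∈ Finset.Icc a b)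
    (hij : i ≠ j) (hfi : f i = false) (hfj : f j = false) : 2 ≤ zc f a b :=
  Finset.one_lt_card.2 ⟨i, Finset.mem_filter.2 ⟨hi, hfi⟩, j, Finset.mem_filter.2 ⟨hj, hfj⟩, hij⟩

lemma zc_no_one (f : ℕ → Bool) (a : ℕ) :
    ∀ b, (∀ t ∈ Finset.Icc a b, zc f a t ≠ 1) → zc f a b = 0 := by
  intro b
  induction b with
  | zero =>
    intro h
    rcases Nat.lt_or_ge 0 a with ha | ha
    · unfold zc; rw [Finset.Icc_eq_empty (by omega)]; simp
    · interval_cases a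
      have := h 0 (by simp)
      rw [zc_single] at this ⊢
      cases hf : f 0 <;> simp_all
  | succ b ih =>
    intro h
    rcases Nat.lt_or_ge (b+1) a with ha | ha
    · unfold zc; rw [Finset.Icc_eq_empty (by omega)]; simp
    · have h1 : zc f a b = 0 := by
        rcases Nat.lt_or_ge b a with hb | hb
        · unfold zc; rw [Finset.Icc_eq_empty (by omega)]; simp
        · exact ih (fun t ht => h t (Finset.mem_Icc.2 ⟨(Finset.mem_Icc.1 ht).1,
            Nat.le_succ_of_le (Finset.mem_Icc.1 ht).2⟩))
      have h2 := h (b+1) (Finset.mem_Icc.2 ⟨ha, le_rfl⟩)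
      rw [zc_split f (by omega) (Nat.le_succ b), h1, zc_single] at h2 ⊢
      cases hf : f (b+1) <;> simp_all

def zcf {Ω : Type*} (X : ℕ → Ω → Bool) (ω : Ω) : ℕ → Bool := fun i => X i ω

lemma zerosCount_eq_zc {Ω : Type*} (X : ℕ → Ω → Bool) (n m : ℕ) (hm : 1 ≤ m) (ω : Ω) :
    zerosCount X n m ω = zc (zcf X ω) n (n + m - 1) := by
  unfold zerosCount zc zcf
  apply Finset.card_bij' (fun j _ => n + j) (fun i _ => i - n)
  · intro a ha
    simp only [Finset.mem_filter, Finset.mem_range, Finset.mem_Icc] at ha ⊢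
    exact ⟨⟨by omega, by omega⟩, ha.2⟩
  · intro a ha
    simp only [Finset.mem_filter, Finset.mem_range, Finset.mem_Icc] at ha ⊢
    refine ⟨by omega, ?_⟩
    have : n + (a - n) = a := by omega
    rw [this]; exact ha.2
  · intro a ha; omega
  · intro a ha
    simp only [Finset.mem_filter, Finset.mem_Icc] at ha
    omega

lemma zc_win (f : ℕ → Bool) (m k : ℕ) (hk1 : 1 ≤ k) (hk2 : k ≤ m) (hkf : f k = false)
    (htrue : ∀ j ∈ Finset.Icc 1 m, j ≠ k → f j = true) :
    ∀ n, 1 ≤ n → zc f n m = if n ≤ k then 1 else 0 := by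
  intro n hn
  unfold zc
  have hfe : (Finset.Icc n m).filter (fun i => f i = false)
      = if n ≤ k then {k} else ∅ := by
    split_ifs with h
    · ext i
      simp only [Finset.mem_filter, Finset.mem_Icc, Finset.mem_singleton]
      constructor
      · rintro ⟨⟨h1, h2⟩, h3⟩
        by_contra hik
        have := htrue i (Finset.mem_Icc.2 ⟨by omega, h2⟩) hik
        simp [this] at h3
      · rintro rfl
        exact ⟨⟨h, hk2⟩, hkf⟩
    · rw [Finset.filter_eq_empty_iff]
      rintro i hi
      simp only [Finset.mem_Icc] at hi
      have := htrue i (Finset.mem_Icc.2 ⟨by omega, hi.2⟩) (by omega)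
      simp [this]
  rw [hfe]
  split_ifs <;> simp

lemma main_equiv (f : ℕ → Bool) (m : ℕ) (hm : 2 ≤ m) :
    (zc f 1 m = 1 ∧ ∀ n ∈ Finset.Icc 2 m, zc f n (n + m - 1) ≠ 1) ↔
      ((f 1 = false ∧ ∀ j ∈ Finset.Icc 2 (2*m-1), f j = true)
      ∨ (∃ k ∈ Finset.Icc 2 (m-1), f k = false ∧ f (m+1) = false ∧
           (∀ j ∈ Finset.Icc 1 m, j ≠ k → f j = true) ∧
           ¬ ∀ j ∈ Finset.Icc (m+2) (m+k), f j = true)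
      ∨ (f m = false ∧ f (m+1) = false ∧ ∀ j ∈ Finset.Icc 1 (m-1), f j = true)) := by
  constructor
  · rintro ⟨h1, h2⟩
    -- extract the unique zero position k
    obtain ⟨k, hk⟩ := Finset.card_eq_one.1 h1
    have hkmem : k ∈ (Finset.Icc 1 m).filter (fun i => f i = false) := by
      rw [hk]; exact Finset.mem_singleton_self k
    rw [Finset.mem_filter, Finset.mem_Icc] at hkmem
    obtain ⟨⟨hk1, hk2⟩, hkf⟩ := hkmem
    have htrue : ∀ j ∈ Finset.Icc 1 m, j ≠ k → f j = true := by
      intro j hj hjk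
      by_contra hjf
      rw [Bool.not_eq_true] at hjf
      have : j ∈ (Finset.Icc 1 m).filter (fun i => f i = false) :=
        Finset.mem_filter.2 ⟨hj, hjf⟩
      rw [hk, Finset.mem_singleton] at this
      exact hjk this
    have hwin := zc_win f m k hk1 hk2 hkf htrue
    have h2' : ∀ n, 2 ≤ n → n ≤ m →
        (if n ≤ k then 1 else 0) + zc f (m+1) (n+m-1) ≠ 1 := by
      intro n hn2 hnm
      have := h2 n (Finset.mem_Icc.2 ⟨hn2, hnm⟩)
      rwa [zc_split f (c := m) (by omega) (by omega), hwin n (by omega)] at this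
    have hfm1 : k ≥ 2 → f (m+1) = false := by
      intro hkk
      have := h2' 2 le_rfl hm
      rw [if_pos (by omega)] at this
      have h21 : 2 + m - 1 = m + 1 := by omega
      rw [h21, zc_single] at this
      cases hf : f (m+1)
      · rfl
      · rw [hf] at this; simp at this
    rcases Nat.lt_or_ge k 2 with hk' | hk'
    · -- k = 1 : left case
      have hk1' : k = 1 := by omega
      subst hk1'
      left
      refine ⟨hkf, ?_⟩
      intro j hj
      rw [Finset.mem_Icc] at hj
      rcases le_or_gt j m with hjm | hjm
      · exact htrue j (Finset.mem_Icc.2 ⟨by omega, hjm⟩) (by omega)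
      · have hz : zc f (m+1) (2*m-1) = 0 := by
          apply zc_no_one
          intro t ht
          rw [Finset.mem_Icc] at ht
          have := h2' (t - m + 1) (by omega) (by omega)
          rw [if_neg (by omega)] at this
          have he : t - m + 1 + m - 1 = t := by omega
          rw [he] at this
          simpa using this
        exact (zc_eq_zero_iff f).1 hz j (Finset.mem_Icc.2 ⟨by omega, hj.2⟩)
    rcases Nat.lt_or_ge k m with hk'' | hk''
    · -- 2 ≤ k ≤ m-1 : middle case
      right; left
      refine ⟨k, Finset.mem_Icc.2 ⟨hk', by omega⟩, hkf, hfm1 hk', htrue, ?_⟩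
      intro hall
      have := h2' (k+1) (by omega) (by omega)
      rw [if_neg (by omega)] at this
      have he : k + 1 + m - 1 = m + k := by omega
      rw [he, zc_split f (c := m+1) (by omega) (by omega), zc_single, hfm1 hk'] at this
      have hz : zc f (m+1+1) (m+k) = 0 := by
        rw [zc_eq_zero_iff]
        intro i hi
        rw [Finset.mem_Icc] at hi
        exact hall i (Finset.mem_Icc.2 ⟨by omega, hi.2⟩)
      rw [hz] at this
      simp at this
    · -- k = m : right case
      have hkm : k = m := by omega
      subst hkm
      right; right
      refine ⟨hkf, hfm1 hk', ?_⟩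
      intro j hj
      rw [Finset.mem_Icc] at hj
      exact htrue j (Finset.mem_Icc.2 ⟨hj.1, by omega⟩) (by omega)
  · rintro (⟨h1, h2⟩ | ⟨k, hkmem, hkf, hm1, htrue, hex⟩ | ⟨hfm, hm1, htrue⟩)
    · -- case B
      constructor
      · rw [zc_split f (c := 1) (by omega) (by omega : (1:ℕ) ≤ m)]
        have hz : zc f (1+1) m = 0 := by
          rw [zc_eq_zero_iff]
          intro i hi
          rw [Finset.mem_Icc] at hi
          exact h2 i (Finset.mem_Icc.2 ⟨by omega, by omega⟩)
        rw [hz, zc_single, h1]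
        simp
      · intro n hn
        rw [Finset.mem_Icc] at hn
        have : zc f n (n+m-1) = 0 := by
          rw [zc_eq_zero_iff]
          intro i hi
          rw [Finset.mem_Icc] at hi
          exact h2 i (Finset.mem_Icc.2 ⟨by omega, by omega⟩)
        omega
    · -- case C
      rw [Finset.mem_Icc] at hkmem
      obtain ⟨hk1, hk2⟩ := hkmem
      have hwin := zc_win f m k (by omega) (by omega) hkf htrue
      push_neg at hex
      obtain ⟨j0, hj0mem, hj0⟩ := hex
      replace hj0 : f j0 = false := by simpa using hj0
      rw [Finset.mem_Icc] at hj0mem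
      constructor
      · rw [hwin 1 le_rfl, if_pos (by omega)]
      · intro n hn
        rw [Finset.mem_Icc] at hn
        rw [zc_split f (c := m) (by omega) (by omega), hwin n (by omega)]
        rcases le_or_gt n k with hnk | hnk
        · rw [if_pos hnk]
          have : 1 ≤ zc f (m+1) (n+m-1) := by
            calc 1 ≤ zc f (m+1) (m+1) := by rw [zc_single, hm1]; simp
            _ ≤ zc f (m+1) (n+m-1) := zc_mono f (by omega)
          omega
        · rw [if_neg (by omega)]
          have h2le : 2 ≤ zc f (m+1) (n+m-1) :=
            zc_two_le f (Finset.mem_Icc.2 ⟨le_rfl, by omega⟩)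
              (Finset.mem_Icc.2 ⟨by omega, by omega⟩) (by omega) hm1 hj0
          omega
    · -- case D
      constructor
      · have hsplit : zc f 1 m = zc f 1 (m-1) + zc f (m-1+1) m := zc_split f (by omega) (by omega)
        have he : m - 1 + 1 = m := by omega
        rw [he] at hsplit
        rw [hsplit, zc_single, hfm, (zc_eq_zero_iff f).2 htrue]
        simp
      · intro n hn
        rw [Finset.mem_Icc] at hn
        have := zc_two_le f (a := n) (b := n+m-1) (i := m) (j := m+1)
          (Finset.mem_Icc.2 ⟨by omega, by omega⟩) (Finset.mem_Icc.2 ⟨by omega, by omega⟩)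
          (by omega) hfm hm1
        omega


lemma main_equiv' {Ω : Type*} (X : ℕ → Ω → Bool) (m : ℕ) (hm : 2 ≤ m) (ω : Ω) :
    (zerosCount X 1 m ω = 1 ∧ ∀ n ∈ Finset.Icc 2 m, ¬ zerosCount X n m ω = 1) ↔
      ((X 1 ω = false ∧ ∀ j ∈ Finset.Icc 2 (2*m-1), X j ω = true)
      ∨ (∃ k ∈ Finset.Icc 2 (m-1), X k ω = false ∧ X (m+1) ω = false ∧
           (∀ j ∈ Finset.Icc 1 m, j ≠ k → X j ω = true) ∧
           ¬ ∀ j ∈ Finset.Icc (m+2) (m+k), X j ω = true)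
      ∨ (X m ω = false ∧ X (m+1) ω = false ∧ ∀ j ∈ Finset.Icc 1 (m-1), X j ω = true)) := by
  have e := main_equiv (zcf X ω) m hm
  have h2 : ∀ n, zerosCount X n m ω = zc (zcf X ω) n (n+m-1) :=
    fun n => zerosCount_eq_zc X n m (by omega) ω
  have h1 : zerosCount X 1 m ω = zc (zcf X ω) 1 m := by
    rw [h2 1]
    congr 1
    omega
  rw [h1]
  simp only [h2]
  exact e

section Events
variable {Ω : Type*}

def evB (X : ℕ → Ω → Bool) (m : ℕ) : Set Ω :=
  {ω | ∀ i ∈ Finset.Icc 1 (2*m-1), X i ω = decide (2 ≤ i)}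
def evC' (X : ℕ → Ω → Bool) (m k : ℕ) : Set Ω :=
  {ω | ∀ i ∈ Finset.Icc 1 (m+1), X i ω = decide (i ≠ k ∧ i ≠ m+1)}
def evCG (X : ℕ → Ω → Bool) (m k : ℕ) : Set Ω :=
  {ω | ∀ i ∈ Finset.Icc 1 (m+k), X i ω = decide (i ≠ k ∧ i ≠ m+1)}
def evG (X : ℕ → Ω → Bool) (m k : ℕ) : Set Ω :=
  {ω | ∀ i ∈ Finset.Icc (m+2) (m+k), X i ω = true}
def evC (X : ℕ → Ω → Bool) (m k : ℕ) : Set Ω := evC' X m k \ evG X m k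
def evD (X : ℕ → Ω → Bool) (m : ℕ) : Set Ω :=
  {ω | ∀ i ∈ Finset.Icc 1 (m+1), X i ω = decide (i < m)}

lemma mem_evB (X : ℕ → Ω → Bool) (m : ℕ) (hm : 2 ≤ m) (ω : Ω) :
    ω ∈ evB X m ↔ (X 1 ω = false ∧ ∀ j ∈ Finset.Icc 2 (2*m-1), X j ω = true) := by
  simp only [evB, Set.mem_setOf_eq]
  constructor
  · intro h
    refine ⟨?_, ?_⟩
    · have := h 1 (Finset.mem_Icc.2 ⟨le_rfl, by omega⟩)
      simpa using this
    · intro j hj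
      rw [Finset.mem_Icc] at hj
      have := h j (Finset.mem_Icc.2 ⟨by omega, hj.2⟩)
      rwa [decide_eq_true hj.1] at this
  · rintro ⟨h1, h2⟩ i hi
    rw [Finset.mem_Icc] at hi
    by_cases hc : 2 ≤ i
    · rw [decide_eq_true hc]
      exact h2 i (Finset.mem_Icc.2 ⟨hc, hi.2⟩)
    · have hi1 : i = 1 := by omega
      subst hi1
      rw [decide_eq_false hc]
      exact h1

lemma mem_evC (X : ℕ → Ω → Bool) (m k : ℕ) (hm : 2 ≤ m) (hk : k ∈ Finset.Icc 2 (m-1)) (ω : Ω) :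
    ω ∈ evC X m k ↔ (X k ω = false ∧ X (m+1) ω = false ∧
      (∀ j ∈ Finset.Icc 1 m, j ≠ k → X j ω = true) ∧
      ¬ ∀ j ∈ Finset.Icc (m+2) (m+k), X j ω = true) := by
  rw [Finset.mem_Icc] at hk
  simp only [evC, evC', evG, Set.mem_diff, Set.mem_setOf_eq]
  constructor
  · rintro ⟨h, hg⟩
    refine ⟨?_, ?_, ?_, hg⟩
    · have := h k (Finset.mem_Icc.2 ⟨by omega, by omega⟩)
      rwa [decide_eq_false (by simp)] at this
    · have := h (m+1) (Finset.mem_Icc.2 ⟨by omega, le_rfl⟩)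
      rwa [decide_eq_false (by simp)] at this
    · intro j hj hjk
      rw [Finset.mem_Icc] at hj
      have := h j (Finset.mem_Icc.2 ⟨hj.1, by omega⟩)
      rwa [decide_eq_true ⟨hjk, by omega⟩] at this
  · rintro ⟨h1, h2, h3, hg⟩
    refine ⟨?_, hg⟩
    intro i hi
    rw [Finset.mem_Icc] at hi
    by_cases hc : i ≠ k ∧ i ≠ m+1
    · rw [decide_eq_true hc]
      exact h3 i (Finset.mem_Icc.2 ⟨hi.1, by omega⟩) hc.1
    · rw [decide_eq_false hc]
      rcases not_and_or.1 hc with hc' | hc'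
      · push_neg at hc'; subst hc'; exact h1
      · push_neg at hc'; subst hc'; exact h2

lemma mem_evD (X : ℕ → Ω → Bool) (m : ℕ) (hm : 2 ≤ m) (ω : Ω) :
    ω ∈ evD X m ↔ (X m ω = false ∧ X (m+1) ω = false ∧
      ∀ j ∈ Finset.Icc 1 (m-1), X j ω = true) := by
  simp only [evD, Set.mem_setOf_eq]
  constructor
  · intro h
    refine ⟨?_, ?_, ?_⟩
    · have := h m (Finset.mem_Icc.2 ⟨by omega, by omega⟩)
      rwa [decide_eq_false (by omega)] at this
    · have := h (m+1) (Finset.mem_Icc.2 ⟨by omega, le_rfl⟩)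
      rwa [decide_eq_false (by omega)] at this
    · intro j hj
      rw [Finset.mem_Icc] at hj
      have := h j (Finset.mem_Icc.2 ⟨hj.1, by omega⟩)
      rwa [decide_eq_true (by omega)] at this
  · rintro ⟨h1, h2, h3⟩ i hi
    rw [Finset.mem_Icc] at hi
    by_cases hc : i < m
    · rw [decide_eq_true hc]
      exact h3 i (Finset.mem_Icc.2 ⟨hi.1, by omega⟩)
    · rw [decide_eq_false hc]
      rcases (by omega : i = m ∨ i = m+1) with h | h
      · subst h; exact h1
      · subst h; exact h2

lemma evCG_eq (X : ℕ → Ω → Bool) (m k : ℕ) (hm : 2 ≤ m) (hk : k ∈ Finset.Icc 2 (m-1)) :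
    evC' X m k ∩ evG X m k = evCG X m k := by
  rw [Finset.mem_Icc] at hk
  ext ω
  simp only [evC', evG, evCG, Set.mem_inter_iff, Set.mem_setOf_eq]
  constructor
  · rintro ⟨h1, h2⟩ i hi
    rw [Finset.mem_Icc] at hi
    rcases le_or_gt i (m+1) with hc | hc
    · exact h1 i (Finset.mem_Icc.2 ⟨hi.1, hc⟩)
    · rw [decide_eq_true ⟨by omega, by omega⟩]
      exact h2 i (Finset.mem_Icc.2 ⟨by omega, hi.2⟩)
  · intro h
    constructor
    · intro i hi
      rw [Finset.mem_Icc] at hi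
      exact h i (Finset.mem_Icc.2 ⟨hi.1, by omega⟩)
    · intro i hi
      rw [Finset.mem_Icc] at hi
      have := h i (Finset.mem_Icc.2 ⟨by omega, hi.2⟩)
      rwa [decide_eq_true ⟨by omega, by omega⟩] at this

end Events

lemma cylMeas {Ω : Type*} [MeasurableSpace Ω] (X : ℕ → Ω → Bool)
    (hmeas : ∀ i, Measurable (X i)) (S : Finset ℕ) (b : ℕ → Bool) :
    MeasurableSet {ω | ∀ i ∈ S, X i ω = b i} := by
  have h : {ω | ∀ i ∈ S, X i ω = b i} = ⋂ i ∈ S, X i ⁻¹' {b i} := by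
    ext ω; simp [Set.mem_iInter]
  rw [h]
  exact MeasurableSet.biInter S.countable_toSet
    (fun i _ => (hmeas i) (measurableSet_singleton _))

lemma cylP {Ω : Type*} [MeasurableSpace Ω] (μ : Measure Ω) [IsProbabilityMeasure μ]
    (X : ℕ → Ω → Bool) (hmeas : ∀ i, Measurable (X i))
    (hindep : iIndepFun X μ)
    (p q : ℝ) (hp : 0 ≤ p) (hq : q = 1 - p)
    (hX : ∀ i, μ {ω | X i ω = true} = ENNReal.ofReal p)
    (S : Finset ℕ) (b : ℕ → Bool) :
    μ {ω | ∀ i ∈ S, X i ω = b i} =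
      ENNReal.ofReal p ^ (S.filter (fun i => b i = true)).card *
      ENNReal.ofReal q ^ (S.filter (fun i => ¬ b i = true)).card := by
  have hfalse : ∀ i, μ {ω | X i ω = false} = ENNReal.ofReal q := by
    intro i
    have hc : {ω | X i ω = false} = {ω | X i ω = true}ᶜ := by
      ext ω; simp
    have hms : MeasurableSet {ω | X i ω = true} :=
      (hmeas i) (measurableSet_singleton true)
    rw [hc, measure_compl hms (measure_ne_top μ _), hX i, measure_univ, hq,
      ← ENNReal.ofReal_one, ← ENNReal.ofReal_sub _ hp]
  have hset : {ω | ∀ i ∈ S, X i ω = b i} = ⋂ i ∈ S, X i ⁻¹' {b i} := by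
    ext ω; simp [Set.mem_iInter]
  rw [hset, hindep.meas_biInter (fun i _ => ⟨{b i}, trivial, rfl⟩)]
  have hprod : ∀ i ∈ S, μ (X i ⁻¹' {b i})
      = if b i = true then ENNReal.ofReal p else ENNReal.ofReal q := by
    intro i _
    cases hb : b i
    · simpa [Set.preimage] using hfalse i
    · simpa [Set.preimage] using hX i
  rw [Finset.prod_congr rfl hprod, Finset.prod_ite, Finset.prod_const, Finset.prod_const]

section M
variable {Ω : Type*} [MeasurableSpace Ω] (μ : Measure Ω) [IsProbabilityMeasure μ]
  (X : ℕ → Ω → Bool)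
variable (hmeas : ∀ i, Measurable (X i))
  (hindep : iIndepFun X μ)
  (p q : ℝ) (hp : 0 ≤ p) (hq : q = 1 - p)
  (hX : ∀ i, μ {ω | X i ω = true} = ENNReal.ofReal p)

include hmeas hindep hp hq hX

lemma meas_evB (m : ℕ) (hm : 2 ≤ m) :
    μ (evB X m) = ENNReal.ofReal p ^ (2*m-2) * ENNReal.ofReal q ^ 1 := by
  rw [show evB X m = {ω | ∀ i ∈ Finset.Icc 1 (2*m-1), X i ω = (fun i => decide (2 ≤ i)) i} from rfl,
    cylP μ X hmeas hindep p q hp hq hX]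
  congr 2
  · have e : (Finset.Icc 1 (2*m-1)).filter (fun i => (decide (2 ≤ i)) = true)
        = Finset.Icc 2 (2*m-1) := by
      ext i
      simp only [Finset.mem_filter, Finset.mem_Icc, decide_eq_true_eq]
      omega
    rw [e, Nat.card_Icc]
    omega
  · have e : (Finset.Icc 1 (2*m-1)).filter (fun i => ¬ (decide (2 ≤ i)) = true)
        = Finset.Icc 1 1 := by
      ext i
      simp only [Finset.mem_filter, Finset.mem_Icc, decide_eq_true_eq]
      omega
    rw [e, Nat.card_Icc]

lemma meas_evD (m : ℕ) (hm : 2 ≤ m) :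
    μ (evD X m) = ENNReal.ofReal p ^ (m-1) * ENNReal.ofReal q ^ 2 := by
  rw [show evD X m = {ω | ∀ i ∈ Finset.Icc 1 (m+1), X i ω = (fun i => decide (i < m)) i} from rfl,
    cylP μ X hmeas hindep p q hp hq hX]
  congr 2
  · have e : (Finset.Icc 1 (m+1)).filter (fun i => (decide (i < m)) = true)
        = Finset.Icc 1 (m-1) := by
      ext i
      simp only [Finset.mem_filter, Finset.mem_Icc, decide_eq_true_eq]
      omega
    rw [e, Nat.card_Icc]
    omega
  · have e : (Finset.Icc 1 (m+1)).filter (fun i => ¬ (decide (i < m)) = true)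
        = Finset.Icc m (m+1) := by
      ext i
      simp only [Finset.mem_filter, Finset.mem_Icc, decide_eq_true_eq]
      omega
    rw [e, Nat.card_Icc]
    omega

lemma meas_evC' (m k : ℕ) (hm : 2 ≤ m) (hk : k ∈ Finset.Icc 2 (m-1)) :
    μ (evC' X m k) = ENNReal.ofReal p ^ (m-1) * ENNReal.ofReal q ^ 2 := by
  rw [Finset.mem_Icc] at hk
  rw [show evC' X m k = {ω | ∀ i ∈ Finset.Icc 1 (m+1),
      X i ω = (fun i => decide (i ≠ k ∧ i ≠ m+1)) i} from rfl,
    cylP μ X hmeas hindep p q hp hq hX]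
  have e2 : (Finset.Icc 1 (m+1)).filter (fun i => ¬ (decide (i ≠ k ∧ i ≠ m+1)) = true)
      = {k, m+1} := by
    ext i
    simp only [Finset.mem_filter, Finset.mem_Icc, decide_eq_true_eq, Finset.mem_insert,
      Finset.mem_singleton]
    omega
  have hc2 : ((Finset.Icc 1 (m+1)).filter (fun i => ¬ (decide (i ≠ k ∧ i ≠ m+1)) = true)).card
      = 2 := by
    rw [e2, Finset.card_insert_of_notMem (by simp; omega), Finset.card_singleton]
  have hc1 : ((Finset.Icc 1 (m+1)).filter (fun i => (decide (i ≠ k ∧ i ≠ m+1)) = true)).card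
      = m - 1 := by
    have := Finset.card_filter_add_card_filter_not
      (s := Finset.Icc 1 (m+1)) (p := fun i => (decide (i ≠ k ∧ i ≠ m+1)) = true)
    rw [Nat.card_Icc] at this
    omega
  rw [hc1, hc2]

lemma meas_evCG (m k : ℕ) (hm : 2 ≤ m) (hk : k ∈ Finset.Icc 2 (m-1)) :
    μ (evCG X m k) = ENNReal.ofReal p ^ (m+k-2) * ENNReal.ofReal q ^ 2 := by
  rw [Finset.mem_Icc] at hk
  rw [show evCG X m k = {ω | ∀ i ∈ Finset.Icc 1 (m+k),
      X i ω = (fun i => decide (i ≠ k ∧ i ≠ m+1)) i} from rfl,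
    cylP μ X hmeas hindep p q hp hq hX]
  have e2 : (Finset.Icc 1 (m+k)).filter (fun i => ¬ (decide (i ≠ k ∧ i ≠ m+1)) = true)
      = {k, m+1} := by
    ext i
    simp only [Finset.mem_filter, Finset.mem_Icc, decide_eq_true_eq, Finset.mem_insert,
      Finset.mem_singleton]
    omega
  have hc2 : ((Finset.Icc 1 (m+k)).filter (fun i => ¬ (decide (i ≠ k ∧ i ≠ m+1)) = true)).card
      = 2 := by
    rw [e2, Finset.card_insert_of_notMem (by simp; omega), Finset.card_singleton]
  have hc1 : ((Finset.Icc 1 (m+k)).filter (fun i => (decide (i ≠ k ∧ i ≠ m+1)) = true)).card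
      = m + k - 2 := by
    have := Finset.card_filter_add_card_filter_not
      (s := Finset.Icc 1 (m+k)) (p := fun i => (decide (i ≠ k ∧ i ≠ m+1)) = true)
    rw [Nat.card_Icc] at this
    omega
  rw [hc1, hc2]

end M


theorem stmt0 {Ω : Type*} [MeasurableSpace Ω] (μ : Measure Ω) [IsProbabilityMeasure μ]
    (X : ℕ → Ω → Bool) (hmeas : ∀ i, Measurable (X i))
    (hindep : iIndepFun X μ)
    (p q : ℝ) (hp : 0 < p) (hp1 : p < 1) (hq : q = 1 - p)
    (hX : ∀ i, μ {ω | X i ω = true} = ENNReal.ofReal p)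
    (m : ℕ) (hm : 2 ≤ m) :
    (μ (contamRun X 1 1 m ∩ ⋂ n ∈ Finset.Icc 2 m, (contamRun X 1 n m)ᶜ)).toReal =
      q * p ^ (m - 1) *
        (p ^ (m - 1) + q * ∑ i ∈ Finset.Icc 1 (m - 2), (1 - p ^ i) + q) := by
  have hp0 : (0:ℝ) ≤ p := hp.le
  have hq0 : (0:ℝ) ≤ q := by rw [hq]; linarith
  set P := ENNReal.ofReal p with hPdef
  set Q := ENNReal.ofReal q with hQdef
  have hE : contamRun X 1 1 m ∩ ⋂ n ∈ Finset.Icc 2 m, (contamRun X 1 n m)ᶜ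
      = (evB X m ∪ ⋃ k ∈ Finset.Icc 2 (m-1), evC X m k) ∪ evD X m := by
    ext ω
    have h := main_equiv' X m hm ω
    simp only [contamRun, Set.mem_inter_iff, Set.mem_setOf_eq, Set.mem_iInter,
      Set.mem_compl_iff, Set.mem_union, Set.mem_iUnion, exists_prop]
    constructor
    · intro hL
      rcases h.1 hL with hB | ⟨k, hk, hkf, hm1, ht, hgg⟩ | hD
      · exact Or.inl (Or.inl ((mem_evB X m hm ω).2 hB))
      · exact Or.inl (Or.inr ⟨k, hk, (mem_evC X m k hm hk ω).2 ⟨hkf, hm1, ht, hgg⟩⟩)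
      · exact Or.inr ((mem_evD X m hm ω).2 hD)
    · intro hR
      apply h.2
      rcases hR with (hB | ⟨k, hk, hC⟩) | hD
      · exact Or.inl ((mem_evB X m hm ω).1 hB)
      · exact Or.inr (Or.inl ⟨k, hk, (mem_evC X m k hm hk ω).1 hC⟩)
      · exact Or.inr (Or.inr ((mem_evD X m hm ω).1 hD))
  have hMB : MeasurableSet (evB X m) := cylMeas X hmeas _ _
  have hMC' : ∀ k, MeasurableSet (evC' X m k) := fun k => cylMeas X hmeas _ _
  have hMG : ∀ k, MeasurableSet (evG X m k) := fun k => cylMeas X hmeas _ (fun _ => true)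
  have hMC : ∀ k, MeasurableSet (evC X m k) := fun k => (hMC' k).diff (hMG k)
  have hMD : MeasurableSet (evD X m) := cylMeas X hmeas _ _
  have hMU : MeasurableSet (⋃ k ∈ Finset.Icc 2 (m-1), evC X m k) :=
    (Finset.Icc 2 (m-1)).measurableSet_biUnion (fun k _ => hMC k)
  have hd1 : Disjoint (evB X m) (⋃ k ∈ Finset.Icc 2 (m-1), evC X m k) := by
    rw [Set.disjoint_left]
    intro ω hB hU
    simp only [Set.mem_iUnion, exists_prop] at hU
    obtain ⟨k, hk, hC⟩ := hU
    have h1 := ((mem_evB X m hm ω).1 hB).2 (m+1) (Finset.mem_Icc.2 ⟨by omega, by omega⟩)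
    have h2 := ((mem_evC X m k hm hk ω).1 hC).2.1
    rw [h1] at h2
    cases h2
  have hdpair : (↑(Finset.Icc 2 (m-1)) : Set ℕ).PairwiseDisjoint (evC X m) := by
    intro k hk l hl hkl
    rw [Finset.mem_coe] at hk hl
    have hk' := Finset.mem_Icc.1 hk
    rw [Function.onFun, Set.disjoint_left]
    intro ω hCk hCl
    have h1 := ((mem_evC X m k hm hk ω).1 hCk).1
    have h2 := ((mem_evC X m l hm hl ω).1 hCl).2.2.1 k
      (Finset.mem_Icc.2 ⟨by omega, by omega⟩) hkl
    rw [h2] at h1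
    cases h1
  have hd2 : Disjoint (evB X m ∪ ⋃ k ∈ Finset.Icc 2 (m-1), evC X m k) (evD X m) := by
    rw [Set.disjoint_left]
    intro ω hBU hD
    obtain ⟨hDm, hDm1, hDt⟩ := (mem_evD X m hm ω).1 hD
    rcases hBU with hB | hU
    · have h1 := ((mem_evB X m hm ω).1 hB).2 (m+1) (Finset.mem_Icc.2 ⟨by omega, by omega⟩)
      rw [hDm1] at h1
      cases h1
    · simp only [Set.mem_iUnion, exists_prop] at hU
      obtain ⟨k, hk, hC⟩ := hU
      have hk' := Finset.mem_Icc.1 hk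
      have h1 := ((mem_evC X m k hm hk ω).1 hC).2.2.1 m
        (Finset.mem_Icc.2 ⟨by omega, le_rfl⟩) (by omega)
      rw [hDm] at h1
      cases h1
  have hPC : ∀ k ∈ Finset.Icc 2 (m-1), μ (evC X m k) = P^(m-1)*Q^2 - P^(m+k-2)*Q^2 := by
    intro k hk
    have hCe : evC X m k = evC' X m k \ (evC' X m k ∩ evG X m k) := by
      rw [Set.diff_self_inter]
      rfl
    rw [hCe, measure_diff Set.inter_subset_left
        ((hMC' k).inter (hMG k)).nullMeasurableSet (measure_ne_top μ _),
      evCG_eq X m k hm hk, meas_evC' μ X hmeas hindep p q hp0 hq hX m k hm hk,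
      meas_evCG μ X hmeas hindep p q hp0 hq hX m k hm hk]
  rw [hE, measure_union hd2 hMD, measure_union hd1 hMU,
    measure_biUnion_finset hdpair (fun k _ => hMC k),
    meas_evB μ X hmeas hindep p q hp0 hq hX m hm,
    meas_evD μ X hmeas hindep p q hp0 hq hX m hm,
    Finset.sum_congr rfl hPC]
  have hPne : P ≠ ⊤ := ENNReal.ofReal_ne_top
  have hQne : Q ≠ ⊤ := ENNReal.ofReal_ne_top
  have hT1 : P^(2*m-2) * Q^1 ≠ ⊤ :=
    ENNReal.mul_ne_top (ENNReal.pow_ne_top hPne) (ENNReal.pow_ne_top hQne)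
  have hT2 : P^(m-1) * Q^2 ≠ ⊤ :=
    ENNReal.mul_ne_top (ENNReal.pow_ne_top hPne) (ENNReal.pow_ne_top hQne)
  have hT3 : ∀ k ∈ Finset.Icc 2 (m-1), P^(m-1)*Q^2 - P^(m+k-2)*Q^2 ≠ ⊤ :=
    fun k _ => ne_top_of_le_ne_top hT2 tsub_le_self
  have hsum_ne : (∑ k ∈ Finset.Icc 2 (m-1), (P^(m-1)*Q^2 - P^(m+k-2)*Q^2)) ≠ ⊤ := by
    rw [ENNReal.sum_ne_top]
    exact hT3
  rw [ENNReal.toReal_add (ENNReal.add_ne_top.2 ⟨hT1, hsum_ne⟩) hT2,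
      ENNReal.toReal_add hT1 hsum_ne, ENNReal.toReal_sum hT3]
  have htr : ∀ a b : ℕ, (P^a * Q^b).toReal = p^a * q^b := by
    intro a b
    rw [ENNReal.toReal_mul, ENNReal.toReal_pow, ENNReal.toReal_pow,
      hPdef, hQdef, ENNReal.toReal_ofReal hp0, ENNReal.toReal_ofReal hq0]
  have hPle : P ≤ 1 := by
    rw [hPdef]
    exact ENNReal.ofReal_le_one.2 hp1.le
  have hsumtr : ∀ k ∈ Finset.Icc 2 (m-1),
      (P^(m-1)*Q^2 - P^(m+k-2)*Q^2).toReal = p^(m-1)*q^2 - p^(m+k-2)*q^2 := by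
    intro k hk
    rw [Finset.mem_Icc] at hk
    have hle : P^(m+k-2)*Q^2 ≤ P^(m-1)*Q^2 := by
      apply mul_le_mul_left
      exact pow_le_pow_of_le_one (by simp) hPle (by omega)
    rw [ENNReal.toReal_sub_of_le hle hT2, htr, htr]
  rw [Finset.sum_congr rfl hsumtr, htr (2*m-2) 1, htr (m-1) 2]
  have hmap : Finset.Icc 2 (m-1) = (Finset.Icc 1 (m-2)).map (addRightEmbedding 1) := by
    rw [Finset.map_add_right_Icc]
    congr 1
    omega
  rw [hmap, Finset.sum_map]
  simp only [addRightEmbedding_apply]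
  have hterm : ∀ i ∈ Finset.Icc 1 (m-2),
      p^(m-1)*q^2 - p^(m+(i+1)-2)*q^2 = p^(m-1)*q^2 * (1 - p^i) := by
    intro i hi
    have he : m + (i+1) - 2 = (m-1) + i := by omega
    rw [he, pow_add]
    ring
  rw [Finset.sum_congr rfl hterm, ← Finset.mul_sum]
  have h2m : 2*m-2 = (m-1) + (m-1) := by omega
  rw [h2m, pow_add]
  ring
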